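/- Let α₁ < α₂ be positive reals, c₁ > 0, c₂ ∈ ℝ, and let g: ℝ₊* → ℝ₊* satisfy g(u) = c₁ u^{-α₁} + c₂ u^{-α₂} + o(u^{-α₂}) as u→∞. Then u = c₁^{1/α₁} g(u)^{-1/α₁} + (c₂ c₁^{(1-α₂)/α₁}/α₁) g(u)^{-(α₁-α₂+1)/α₁} + o(g(u)^{-(α₁-α₂+1)/α₁}) as u→∞. -/

import Mathlib

open Filter Asymptotics

private lemma taylor_rpow (p : ℝ) :
    (fun x : ℝ => (1 + x) ^ p - 1 - p * x) =o[nhds 0] (fun x : ℝ => x) := by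
  have h2 : HasDerivAt (fun x : ℝ => 1 + x) 1 0 := by
    simpa using (hasDerivAt_id (0:ℝ)).const_add (1:ℝ)
  have h1 : HasDerivAt (fun x : ℝ => (1 + x) ^ p) p 0 := by
    have h := Real.hasDerivAt_rpow_const (x := (1:ℝ)) (p := p) (Or.inl one_ne_zero)
    have h3 := HasDerivAt.comp (𝕜 := ℝ) 0 (by simpa using h) h2
    simp at h3; exact h3
  have h3 := hasDerivAt_iff_isLittleO.mp h1
  simp only [add_zero, sub_zero, Real.one_rpow, smul_eq_mul] at h3
  refine h3.congr' ?_ (by rfl)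
  filter_upwards with x
  ring

theorem stmt7 (α₁ α₂ c₁ c₂ : ℝ) (h1 : 0 < α₁) (h12 : α₁ < α₂) (hc1 : 0 < c₁)
    (g : ℝ → ℝ) (hg : ∀ u : ℝ, 0 < u → 0 < g u)
    (hgas : (fun u : ℝ => g u - (c₁ * u ^ (-α₁) + c₂ * u ^ (-α₂)))
      =o[atTop] fun u : ℝ => u ^ (-α₂)) :
    (fun u : ℝ => u -
        (c₁ ^ (1 / α₁) * g u ^ (-(1 / α₁)) +
          (c₂ * c₁ ^ ((1 - α₂) / α₁) / α₁) * g u ^ (-((α₁ - α₂ + 1) / α₁))))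
      =o[atTop] fun u : ℝ => g u ^ (-((α₁ - α₂ + 1) / α₁)) := by
  have hα₁ : α₁ ≠ 0 := ne_of_gt h1
  set β : ℝ := α₂ - α₁ with hβ
  have hβ0 : 0 < β := sub_pos.mpr h12
  set γ : ℝ := (α₁ - α₂ + 1) / α₁ with hγ
  set p : ℝ := -(1 / α₁) with hp
  set δ : ℝ → ℝ := fun u => g u / (c₁ * u ^ (-α₁)) - 1 with hδdef
  have hδpos : ∀ u : ℝ, 0 < u → 0 < 1 + δ u := by
    intro u hu
    have h0 : (0:ℝ) < c₁ * u ^ (-α₁) := by positivity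
    have : 0 < g u / (c₁ * u ^ (-α₁)) := div_pos (hg u hu) h0
    simp only [hδdef]; linarith
  have hgd : ∀ u : ℝ, 0 < u → g u = c₁ * u ^ (-α₁) * (1 + δ u) := by
    intro u hu
    have h0 : c₁ * u ^ (-α₁) ≠ 0 := by positivity
    simp only [hδdef, add_sub_cancel]; field_simp
  have hδu' : ∀ u : ℝ, 0 < u → δ u = g u * u ^ α₁ / c₁ - 1 := by
    intro u hu
    simp only [hδdef]
    rw [Real.rpow_neg hu.le]
    have hne : u ^ α₁ ≠ 0 := by positivity
    field_simp
  -- key : δ - (c₂/c₁) u^{-β} =o[atTop] u^{-β}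
  have key : (fun u => δ u - (c₂ / c₁) * u ^ (-β)) =o[atTop] fun u : ℝ => u ^ (-β) := by
    have h2 : (fun u : ℝ => (g u - (c₁ * u ^ (-α₁) + c₂ * u ^ (-α₂))) * (u ^ α₁ / c₁))
        =o[atTop] fun u : ℝ => u ^ (-α₂) * (u ^ α₁ / c₁) :=
      hgas.mul_isBigO (isBigO_refl _ _)
    have h3 : (fun u : ℝ => u ^ (-α₂) * (u ^ α₁ / c₁)) =ᶠ[atTop]
        fun u : ℝ => (1 / c₁) * u ^ (-β) := by
      filter_upwards [eventually_gt_atTop 0] with u hu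
      have hu2 : u ^ (-α₂) * u ^ α₁ = u ^ (-β) := by
        rw [← Real.rpow_add hu]; congr 1; rw [hβ]; ring
      linear_combination (1 / c₁) * hu2
    have h4 := (h2.congr' (by rfl) h3).trans_isBigO (isBigO_const_mul_self (1/c₁) _ _)
    refine h4.congr' ?_ (by rfl)
    filter_upwards [eventually_gt_atTop 0] with u hu
    have hA : (0:ℝ) < u ^ α₁ := Real.rpow_pos_of_pos hu _
    have hB : (0:ℝ) < u ^ β := Real.rpow_pos_of_pos hu _
    have e1 : u ^ (-α₁) = (u ^ α₁)⁻¹ := by rw [Real.rpow_neg hu.le]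
    have e3 : u ^ (-β) = (u ^ β)⁻¹ := by rw [Real.rpow_neg hu.le]
    have e2 : u ^ (-α₂) = (u ^ α₁)⁻¹ * (u ^ β)⁻¹ := by
      rw [Real.rpow_neg hu.le, ← mul_inv, ← Real.rpow_add hu]
      congr 2; rw [hβ]; ring
    rw [hδu' u hu, e1, e2, e3]
    field_simp
    ring
  -- δ = O(u^{-β})
  have hδO : δ =O[atTop] fun u : ℝ => u ^ (-β) := by
    have := key.isBigO.add (isBigO_const_mul_self (c₂/c₁) (fun u : ℝ => u ^ (-β)) atTop)
    refine this.congr_left fun u => by ring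
  have hδ0 : Tendsto δ atTop (nhds 0) := hδO.trans_tendsto (tendsto_rpow_neg_atTop hβ0)
  -- composed Taylor remainder
  set φ : ℝ → ℝ := fun x => (1 + x) ^ p - 1 - p * x with hφdef
  have hφδ : (fun u => φ (δ u)) =o[atTop] fun u : ℝ => u ^ (-β) :=
    ((taylor_rpow p).comp_tendsto hδ0).trans_isBigO hδO
  set ψ : ℝ → ℝ := fun x => (1 + x) ^ (-γ) - 1 with hψdef
  have hψ0 : Tendsto (fun u => ψ (δ u)) atTop (nhds 0) := by
    have hc : ContinuousAt (fun x : ℝ => (1 + x) ^ (-γ)) 0 :=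
      (continuousAt_const.add continuousAt_id).rpow_const (by left; norm_num)
    have : Tendsto (fun x : ℝ => (1 + x) ^ (-γ) - 1) (nhds 0) (nhds 0) := by
      have h := hc.tendsto
      simp only [add_zero, Real.one_rpow] at h
      simpa using h.sub (tendsto_const_nhds (x := (1:ℝ)))
    exact this.comp hδ0
  -- the three error terms, all little-o of u^(1-β)
  have hR : (fun u : ℝ => u ^ (-β) * u) =ᶠ[atTop] fun u : ℝ => u ^ (1 - β) := by
    filter_upwards [eventually_gt_atTop 0] with u hu
    have : u ^ (-β) * u ^ (1:ℝ) = u ^ (1 - β) := by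
      rw [← Real.rpow_add hu]; congr 1; ring
    simpa using this
  have hT1 : (fun u => (1/α₁) * ((δ u - (c₂ / c₁) * u ^ (-β)) * u))
      =o[atTop] fun u : ℝ => u ^ (1 - β) :=
    ((key.mul_isBigO (isBigO_refl (fun u : ℝ => u) atTop)).congr' (by rfl) hR).const_mul_left _
  have hT2 : (fun u => φ (δ u) * u) =o[atTop] fun u : ℝ => u ^ (1 - β) :=
    (hφδ.mul_isBigO (isBigO_refl (fun u : ℝ => u) atTop)).congr' (by rfl) hR
  have hT3 : (fun u => (c₂ / (α₁ * c₁)) * (ψ (δ u) * u ^ (1 - β)))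
      =o[atTop] fun u : ℝ => u ^ (1 - β) := by
    have h := ((isLittleO_one_iff ℝ).mpr hψ0).mul_isBigO
      (isBigO_refl (fun u : ℝ => u ^ (1 - β)) atTop)
    exact (h.congr' (by rfl) (by filter_upwards with u; simp)).const_mul_left _
  have hS : (fun u => (1/α₁) * ((δ u - (c₂ / c₁) * u ^ (-β)) * u) - φ (δ u) * u
      - (c₂ / (α₁ * c₁)) * (ψ (δ u) * u ^ (1 - β))) =o[atTop] fun u : ℝ => u ^ (1 - β) :=
    (hT1.sub hT2).sub hT3
  -- the target function agrees eventually with the sum above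
  have hFS : (fun u : ℝ => u -
        (c₁ ^ (1 / α₁) * g u ^ p +
          (c₂ * c₁ ^ ((1 - α₂) / α₁) / α₁) * g u ^ (-γ)))
      =ᶠ[atTop] (fun u => (1/α₁) * ((δ u - (c₂ / c₁) * u ^ (-β)) * u) - φ (δ u) * u
      - (c₂ / (α₁ * c₁)) * (ψ (δ u) * u ^ (1 - β))) := by
    filter_upwards [eventually_gt_atTop 0] with u hu
    have h1a : (0:ℝ) < 1 + δ u := hδpos u hu
    have hpow : ∀ q : ℝ, g u ^ q = c₁ ^ q * u ^ ((-α₁) * q) * (1 + δ u) ^ q := by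
      intro q
      rw [hgd u hu, Real.mul_rpow (by positivity) h1a.le,
        Real.mul_rpow hc1.le (Real.rpow_nonneg hu.le _), Real.rpow_mul hu.le]
    have e_p : g u ^ p = c₁ ^ p * (u * (1 + δ u) ^ p) := by
      rw [hpow p, show (-α₁) * p = 1 by rw [hp]; field_simp]
      rw [Real.rpow_one]; ring
    have e_g : g u ^ (-γ) = c₁ ^ (-γ) * (u ^ (1 - β) * (1 + δ u) ^ (-γ)) := by
      rw [hpow (-γ), show (-α₁) * (-γ) = 1 - β by rw [hγ, hβ]; field_simp; ring]
      ring
    have ephi : (1 + δ u) ^ p = φ (δ u) + 1 + p * δ u := by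
      simp only [hφdef]; ring
    have epsi : (1 + δ u) ^ (-γ) = ψ (δ u) + 1 := by
      simp only [hψdef]; ring
    have ec1 : c₁ ^ (1 / α₁) * c₁ ^ p = 1 := by
      rw [← Real.rpow_add hc1, hp]; simp
    have ec2 : c₁ ^ ((1 - α₂) / α₁) * c₁ ^ (-γ) = c₁⁻¹ := by
      rw [← Real.rpow_add hc1, show (1 - α₂) / α₁ + -γ = -1 by rw [hγ]; field_simp; ring]
      exact Real.rpow_neg_one c₁
    have eu : u ^ (-β) * u = u ^ (1 - β) := by
      have : u ^ (-β) * u ^ (1:ℝ) = u ^ (1 - β) := by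
        rw [← Real.rpow_add hu]; congr 1; ring
      simpa using this
    rw [e_p, e_g, ephi, epsi, hp]
    linear_combination (-(u * (φ (δ u) + 1 + (-(1/α₁)) * δ u))) * ec1 +
      (-(c₂ / α₁ * (u ^ (1 - β) * (ψ (δ u) + 1)))) * ec2 + (c₂ / (α₁ * c₁)) * eu
  have hFL := hS.congr' hFS.symm (by rfl)
  -- compare u^(1-β) with g^(-γ)
  have hLO : (fun u : ℝ => u ^ (1 - β)) =O[atTop] fun u : ℝ => g u ^ (-γ) := by
    have hct : ContinuousAt (fun x : ℝ => (1 + x) ^ γ) 0 :=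
      (continuousAt_const.add continuousAt_id).rpow_const (by left; norm_num)
    have ht1 : Tendsto (fun u => (1 + δ u) ^ γ) atTop (nhds 1) := by
      have h := hct.tendsto.comp hδ0
      simp at h; exact h
    have ht : Tendsto (fun u => c₁ ^ γ * (1 + δ u) ^ γ) atTop (nhds (c₁ ^ γ)) := by
      simpa using (tendsto_const_nhds (x := c₁ ^ γ) (f := atTop)).mul ht1
    have hO1 := (ht.isBigO_one ℝ).mul (isBigO_refl (fun u : ℝ => g u ^ (-γ)) atTop)
    refine hO1.congr' ?_ (by filter_upwards with u; simp)
    filter_upwards [eventually_gt_atTop 0] with u hu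
    have h1a : (0:ℝ) < 1 + δ u := hδpos u hu
    have hpow : g u ^ (-γ) = c₁ ^ (-γ) * u ^ ((-α₁) * (-γ)) * (1 + δ u) ^ (-γ) := by
      rw [hgd u hu, Real.mul_rpow (by positivity) h1a.le,
        Real.mul_rpow hc1.le (Real.rpow_nonneg hu.le _), Real.rpow_mul hu.le]
    rw [hpow, show (-α₁) * (-γ) = 1 - β by rw [hγ, hβ]; field_simp; ring]
    have hc1' : c₁ ^ γ * c₁ ^ (-γ) = 1 := by
      rw [← Real.rpow_add hc1]; simp
    have ha' : (1 + δ u) ^ γ * (1 + δ u) ^ (-γ) = 1 := by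
      rw [← Real.rpow_add h1a]; simp
    calc c₁ ^ γ * (1 + δ u) ^ γ * (c₁ ^ (-γ) * u ^ (1 - β) * (1 + δ u) ^ (-γ))
        = (c₁ ^ γ * c₁ ^ (-γ)) * ((1 + δ u) ^ γ * (1 + δ u) ^ (-γ)) * u ^ (1 - β) := by ring
      _ = u ^ (1 - β) := by rw [hc1', ha']; ring
  exact hFL.trans_isBigO hLO
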